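/- arXiv:1905.10477 — 3 statements merged into one kernel-verified Lean document; each statement's English description precedes it below -/
import Mathlib

section
/- There exist a universal constant c₀ > 0 and a natural number N₀ such that for every n ≥ N₀, every natural number k with 1 ≤ k ≤ n/2, and every ε with 2/n ≤ ε ≤ 1/4, there exist n-node graphs G₀, G₁ ∈ 𝒢_{n,k} at node distance at most ⌈1/ε⌉ such that |p_{G₀} − p_{G₁}| ≥ c₀·k/(ε·n²). -/
open MeasureTheory Finset
open scoped Classical

noncomputable section

/-- Two `n`-node graphs are node-adjacent if every edge in the symmetric
difference of their edge sets is incident to a single vertex `i`. -/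
def NodeAdjacent {n : ℕ} (G G' : SimpleGraph (Fin n)) : Prop :=
  ∃ i : Fin n, ∀ u v : Fin n, ¬ (G.Adj u v ↔ G'.Adj u v) → u = i ∨ v = i

/-- `G` and `G'` are at node distance at most `c`: there is a path of length `c`
of consecutively node-adjacent graphs from `G` to `G'`. -/
def NodeDistLE {n : ℕ} (G G' : SimpleGraph (Fin n)) (c : ℕ) : Prop :=
  ∃ g : ℕ → SimpleGraph (Fin n), g 0 = G ∧ g c = G' ∧
    ∀ j < c, NodeAdjacent (g j) (g (j + 1))

/-- `(ε,δ)`-node-differential privacy for a randomized algorithm, viewed as a map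
assigning to each graph a (probability) measure on the output space `R`. -/
def NodeDP {n : ℕ} {R : Type*} [MeasurableSpace R]
    (A : SimpleGraph (Fin n) → Measure R) (ε δ : ℝ) : Prop :=
  ∀ G G' : SimpleGraph (Fin n), NodeAdjacent G G' → ∀ S : Set R, MeasurableSet S →
    ((A G) S).toReal ≤ Real.exp ε * ((A G') S).toReal + δ

/-- Number of edges of `G`. -/
def edgeCount {n : ℕ} (G : SimpleGraph (Fin n)) : ℕ := G.edgeSet.ncard

/-- The empirical edge density `p_G = |E| / C(n,2)`. -/
def edgeDensity {n : ℕ} (G : SimpleGraph (Fin n)) : ℝ :=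
  (edgeCount G : ℝ) / (n.choose 2 : ℝ)

/-- Degree of a vertex. -/
def deg {n : ℕ} (G : SimpleGraph (Fin n)) (v : Fin n) : ℕ := (G.neighborSet v).ncard

/-- Average degree `d̄_G = 2|E|/n  ( = (n-1)·p_G )`. -/
def avgDeg {n : ℕ} (G : SimpleGraph (Fin n)) : ℝ := 2 * (edgeCount G : ℝ) / n

/-- `G ∈ 𝒢_{n,k}` : every degree lies in `[d̄ - k, d̄ + k]`. -/
def Concentrated {n : ℕ} (G : SimpleGraph (Fin n)) (k : ℝ) : Prop :=
  ∀ v : Fin n, |(deg G v : ℝ) - avgDeg G| ≤ k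

/-- The number of vertices whose degree lies outside `[d̄_G - k* - 3m, d̄_G + k* + 3m]`. -/
def farCount {n : ℕ} (G : SimpleGraph (Fin n)) (kstar : ℝ) (m : ℕ) : ℕ :=
  {v : Fin n | kstar + 3 * (m : ℝ) < |(deg G v : ℝ) - avgDeg G|}.ncard

/-- `k_G` : the smallest positive integer `m` such that at most `m` vertices have
degree outside `[d̄_G - k* - 3m, d̄_G + k* + 3m]`. -/
def kOf {n : ℕ} (G : SimpleGraph (Fin n)) (kstar : ℝ) : ℕ :=
  sInf {m : ℕ | 0 < m ∧ farCount G kstar m ≤ m}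

/-- `t_v` : the distance from `deg_G(v)` to the interval `I_G`. -/
def tDist {n : ℕ} (G : SimpleGraph (Fin n)) (kstar : ℝ) (v : Fin n) : ℝ :=
  max 0 (|(deg G v : ℝ) - avgDeg G| - (kstar + 3 * (kOf G kstar : ℝ)))

/-- The weight `wt_G(v) = max(0, 1 - β t_v)`. -/
def wt {n : ℕ} (G : SimpleGraph (Fin n)) (kstar β : ℝ) (v : Fin n) : ℝ :=
  max 0 (1 - β * tDist G kstar v)

/-- The value of the pair `{u,v}`:
`val_G({u,v}) = wt_G({u,v})·x_{uv} + (1 - wt_G({u,v}))·p_G`,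
where `wt_G({u,v}) = min(wt_G(u), wt_G(v))`. -/
def valPair {n : ℕ} (G : SimpleGraph (Fin n)) (kstar β : ℝ) (u v : Fin n) : ℝ :=
  min (wt G kstar β u) (wt G kstar β v) * (if G.Adj u v then 1 else 0)
    + (1 - min (wt G kstar β u) (wt G kstar β v)) * edgeDensity G

/-- `f(G)` : the sum of `val_G({u,v})` over unordered pairs of distinct vertices. -/
def fEst {n : ℕ} (G : SimpleGraph (Fin n)) (kstar β : ℝ) : ℝ :=
  (∑ u : Fin n, ∑ v : Fin n, if u ≠ v then valPair G kstar β u v else 0) / 2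

/-- `f_u(G) = Σ_{v ≠ u} val_G({u,v})`. -/
def fVert {n : ℕ} (G : SimpleGraph (Fin n)) (kstar β : ℝ) (u : Fin n) : ℝ :=
  ∑ v ∈ Finset.univ.erase u, valPair G kstar β u v

/-- The smooth upper bound
`S(G) = sup_{ℓ ≥ 0} e^{-βℓ} · C·((k_G+ℓ+k*)(1+β(k_G+ℓ)) + 1/β)`. -/
def smoothS {n : ℕ} (G : SimpleGraph (Fin n)) (kstar β C : ℝ) : ℝ :=
  ⨆ ℓ : {x : ℝ // 0 ≤ x},
    Real.exp (-β * (ℓ : ℝ)) *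
      (C * (((kOf G kstar : ℝ) + (ℓ : ℝ) + kstar) * (1 + β * ((kOf G kstar : ℝ) + (ℓ : ℝ))) + 1 / β))

/-- The Student's t-distribution with 3 degrees of freedom, as a measure on `ℝ`. -/
def studentT3 : Measure ℝ :=
  MeasureTheory.volume.withDensity
    (fun z => ENNReal.ofReal (2 / (Real.sqrt 3 * Real.pi * (1 + z ^ 2 / 3) ^ 2)))

/-- The disjoint union of cliques on `Fin n` given by a block-assignment `π`. -/
def cliqueUnion {n i : ℕ} (π : Fin n → Fin i) : SimpleGraph (Fin n) where
  Adj u v := u ≠ v ∧ π u = π v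
  symm := ⟨fun u v h => ⟨Ne.symm h.1, h.2.symm⟩⟩
  loopless := ⟨fun u h => h.1 rfl⟩


def Hgraph (n k j : ℕ) : SimpleGraph (Fin n) where
  Adj u v := u ≠ v ∧ (u : ℕ) / (k+1) = (v : ℕ) / (k+1) ∧ ((u:ℕ) < j ∨ (v:ℕ) < j)
  symm := ⟨fun u v h => ⟨h.1.symm, h.2.1.symm, h.2.2.symm⟩⟩
  loopless := ⟨fun u h => h.1 rfl⟩

lemma Hgraph_zero (n k : ℕ) : Hgraph n k 0 = ⊥ := by
  ext u v; simp [Hgraph]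

lemma Hgraph_deg_le (n k j : ℕ) (u : Fin n) : (Hgraph n k j).degree u ≤ k := by
  classical
  rw [← SimpleGraph.card_neighborFinset_eq_degree]
  have h : ((Finset.range (k+1)).erase ((u:ℕ) % (k+1))).card = k := by
    rw [Finset.card_erase_of_mem (by simp [Nat.mod_lt _ (Nat.succ_pos k)])]
    simp
  have key : #((Hgraph n k j).neighborFinset u) ≤ #((Finset.range (k+1)).erase ((u:ℕ) % (k+1))) := by
   refine Finset.card_le_card_of_injOn (fun v => (v : ℕ) % (k+1)) ?_ ?_
   · intro v hv
     rw [Finset.mem_coe, SimpleGraph.mem_neighborFinset] at hv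
     obtain ⟨hne, hblk, -⟩ := hv
     refine Finset.mem_erase.mpr ⟨?_, Finset.mem_range.mpr (Nat.mod_lt _ (Nat.succ_pos k))⟩
     intro hmod
     dsimp only at hmod
     apply hne
     apply Fin.ext
     have e1 := Nat.div_add_mod' (u:ℕ) (k+1)
     have e2 := Nat.div_add_mod' (v:ℕ) (k+1)
     rw [hblk] at e1
     omega
   · intro v hv w hw hvw
     rw [Finset.mem_coe, SimpleGraph.mem_neighborFinset] at hv hw
     apply Fin.ext
     dsimp only at hvw
     have e1 := Nat.div_add_mod' (v:ℕ) (k+1)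
     have e2 := Nat.div_add_mod' (w:ℕ) (k+1)
     have h1 : (v:ℕ)/(k+1) = (w:ℕ)/(k+1) := hv.2.1.symm.trans hw.2.1
     rw [h1] at e1
     omega
  omega

lemma Hgraph_deg_hub (n k m : ℕ) (hmk : m + k ≤ n) (u : Fin n) (hu : (u:ℕ) < m) :
    k ≤ (Hgraph n k m).degree u := by
  classical
  rw [← SimpleGraph.card_neighborFinset_eq_degree]
  have h : ((Finset.range (k+1)).erase ((u:ℕ) % (k+1))).card = k := by
    rw [Finset.card_erase_of_mem (by simp [Nat.mod_lt _ (Nat.succ_pos k)])]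
    simp
  have hlt : ∀ i, i ∈ (Finset.range (k+1)).erase ((u:ℕ) % (k+1)) →
      (u:ℕ)/(k+1)*(k+1) + i < n := by
    intro i hi
    have hi' : i < k + 1 := Finset.mem_range.mp (Finset.mem_erase.mp hi).2
    have h2 : (u:ℕ)/(k+1)*(k+1) ≤ (u:ℕ) := Nat.div_mul_le_self _ _
    omega
  have key : #((Finset.range (k+1)).erase ((u:ℕ) % (k+1))) ≤ #((Hgraph n k m).neighborFinset u) := by
   refine Finset.card_le_card_of_injOn
    (fun i => if hi : (u:ℕ)/(k+1)*(k+1) + i < n then (⟨_, hi⟩ : Fin n) else u) ?_ ?_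
   · intro i hi
     rw [Finset.mem_coe, Finset.mem_erase, Finset.mem_range] at hi
     dsimp only
     rw [dif_pos (hlt i (by simp [Finset.mem_erase, Finset.mem_range, hi.1, hi.2]))]
     rw [Finset.mem_coe, SimpleGraph.mem_neighborFinset]
     have hq : ((u:ℕ)/(k+1)*(k+1) + i) / (k+1) = (u:ℕ)/(k+1) := by
       rw [Nat.add_comm, Nat.add_mul_div_right _ _ (Nat.succ_pos k), Nat.div_eq_of_lt hi.2]
       omega
     have hr : ((u:ℕ)/(k+1)*(k+1) + i) % (k+1) = i := by
       rw [Nat.add_comm, Nat.add_mul_mod_self_right, Nat.mod_eq_of_lt hi.2]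
     refine ⟨?_, ?_, Or.inl hu⟩
     · intro hEq
       apply hi.1
       have h1 : ((u:ℕ)/(k+1)*(k+1) + i) = (u:ℕ) := congrArg Fin.val hEq.symm
       have := Nat.div_add_mod' (u:ℕ) (k+1)
       omega
     · exact hq.symm
   · intro a ha b hb hab
     have ha' := hlt a ha
     have hb' := hlt b hb
     dsimp only at hab
     simp only [dif_pos ha', dif_pos hb'] at hab
     have := congrArg Fin.val hab
     simpa using this
  omega

lemma Hgraph_adj (n k j : ℕ) (u v : Fin n) :
    (Hgraph n k j).Adj u v ↔ u ≠ v ∧ (u : ℕ) / (k+1) = (v : ℕ) / (k+1) ∧ ((u:ℕ) < j ∨ (v:ℕ) < j) :=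
  Iff.rfl

lemma Hgraph_deg_far (n k m : ℕ) (v : Fin n) (hv : m + k ≤ (v:ℕ)) :
    (Hgraph n k m).degree v = 0 := by
  classical
  rw [← SimpleGraph.card_neighborFinset_eq_degree, Finset.card_eq_zero]
  ext w
  simp only [SimpleGraph.mem_neighborFinset, Finset.notMem_empty, iff_false]
  rintro ⟨hne, hblk, hor⟩
  have e1 := Nat.div_add_mod' (v:ℕ) (k+1)
  have e2 := Nat.div_add_mod' (w:ℕ) (k+1)
  have h2 : (v:ℕ) % (k+1) < k+1 := Nat.mod_lt _ (Nat.succ_pos k)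
  rw [hblk] at e1
  omega

lemma card_filter_lt_le (n c : ℕ) :
    #((Finset.univ : Finset (Fin n)).filter fun v : Fin n => (v:ℕ) < c) ≤ c := by
  classical
  have := Finset.card_le_card_of_injOn (Fin.val)
    (s := (Finset.univ : Finset (Fin n)).filter fun v : Fin n => (v:ℕ) < c) (t := Finset.range c)
    (by intro a ha; simp only [Finset.mem_coe, Finset.mem_filter] at ha; exact Finset.mem_range.mpr ha.2)
    (by intro a _ b _ h; exact Fin.ext h)
  simpa using this

lemma le_card_filter_lt (n c : ℕ) (hn : 0 < n) (h : c ≤ n) :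
    c ≤ #((Finset.univ : Finset (Fin n)).filter fun v : Fin n => (v:ℕ) < c) := by
  classical
  have := Finset.card_le_card_of_injOn
    (fun i => if hi : i < n then (⟨i, hi⟩ : Fin n) else ⟨0, hn⟩)
    (s := Finset.range c)
    (t := (Finset.univ : Finset (Fin n)).filter fun v : Fin n => (v:ℕ) < c)
    (by intro i hi
        rw [Finset.mem_coe, Finset.mem_range] at hi
        dsimp only
        rw [dif_pos (lt_of_lt_of_le hi h)]
        simp [hi])
    (by intro a ha b hb hab
        rw [Finset.mem_coe, Finset.mem_range] at ha hb
        dsimp only at hab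
        rw [dif_pos (lt_of_lt_of_le ha h), dif_pos (lt_of_lt_of_le hb h)] at hab
        simpa using hab)
  simpa using this

lemma sum_deg_lb (n k m : ℕ) (hn : 0 < n) (hmk : m + k ≤ n) :
    m * k ≤ ∑ v : Fin n, (Hgraph n k m).degree v := by
  classical
  have h1 : m * k ≤ ∑ v ∈ (Finset.univ.filter fun v : Fin n => (v:ℕ) < m),
      (Hgraph n k m).degree v := by
    calc m * k ≤ #(Finset.univ.filter fun v : Fin n => (v:ℕ) < m) * k := by
          have := le_card_filter_lt n m hn (by omega)
          exact Nat.mul_le_mul_right k this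
    _ ≤ _ := by
          apply Finset.card_nsmul_le_sum
          intro v hv
          rw [Finset.mem_filter] at hv
          exact Hgraph_deg_hub n k m hmk v hv.2
  exact h1.trans (Finset.sum_le_sum_of_subset (Finset.filter_subset _ _))

lemma sum_deg_ub (n k m : ℕ) : ∑ v : Fin n, (Hgraph n k m).degree v ≤ (m + k) * k := by
  classical
  rw [← Finset.sum_filter_add_sum_filter_not Finset.univ (fun v : Fin n => (v:ℕ) < m + k)]
  have h2 : ∑ v ∈ (Finset.univ.filter fun v : Fin n => ¬ ((v:ℕ) < m + k)),
      (Hgraph n k m).degree v = 0 := by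
    apply Finset.sum_eq_zero
    intro v hv
    rw [Finset.mem_filter] at hv
    exact Hgraph_deg_far n k m v (by omega)
  rw [h2, Nat.add_zero]
  calc ∑ v ∈ (Finset.univ.filter fun v : Fin n => (v:ℕ) < m + k), (Hgraph n k m).degree v
      ≤ #(Finset.univ.filter fun v : Fin n => (v:ℕ) < m + k) * k := by
        apply Finset.sum_le_card_nsmul
        intro v _
        exact Hgraph_deg_le n k m v
    _ ≤ (m + k) * k := Nat.mul_le_mul_right k (card_filter_lt_le n (m+k))



lemma deg_eq_degree (n : ℕ) (G : SimpleGraph (Fin n)) (v : Fin n) : deg G v = G.degree v := by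
  classical
  rw [deg, ← SimpleGraph.card_neighborSet_eq_degree, Set.ncard_eq_toFinset_card',
    Set.toFinset_card]

lemma edgeCount_eq (n : ℕ) (G : SimpleGraph (Fin n)) : edgeCount G = #G.edgeFinset := by
  classical
  rw [edgeCount, Set.ncard_eq_toFinset_card', Set.toFinset_card]
  convert (SimpleGraph.edgeFinset_card (G := G)).symm

lemma edge_lb (n k m : ℕ) (hn : 0 < n) (hmk : m + k ≤ n) :
    m * k ≤ 2 * edgeCount (Hgraph n k m) := by
  classical
  rw [edgeCount_eq, ← SimpleGraph.sum_degrees_eq_twice_card_edges]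
  exact sum_deg_lb n k m hn hmk

lemma edge_ub (n k m : ℕ) : 2 * edgeCount (Hgraph n k m) ≤ (m + k) * k := by
  classical
  rw [edgeCount_eq, ← SimpleGraph.sum_degrees_eq_twice_card_edges]
  exact sum_deg_ub n k m

lemma edgeCount_H0 (n k : ℕ) : edgeCount (Hgraph n k 0) = 0 := by
  rw [Hgraph_zero, edgeCount, SimpleGraph.edgeSet_bot, Set.ncard_empty]

lemma conc_H0 (n k : ℕ) (kk : ℝ) (hk : 0 ≤ kk) : Concentrated (Hgraph n k 0) kk := by
  intro v
  have h1 : deg (Hgraph n k 0) v = 0 := by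
    rw [Hgraph_zero, deg]
    simp [SimpleGraph.neighborSet]
  have h2 : avgDeg (Hgraph n k 0) = 0 := by
    rw [avgDeg, edgeCount_H0]
    simp
  rw [h1, h2]
  simpa using hk

lemma conc_H (n k m : ℕ) (hn : 0 < n) (hmk : m + k ≤ n) :
    Concentrated (Hgraph n k m) (k : ℝ) := by
  intro v
  have h1 : (deg (Hgraph n k m) v : ℝ) ≤ k := by
    rw [deg_eq_degree]
    exact_mod_cast Hgraph_deg_le n k m v
  have h0 : (0:ℝ) ≤ (deg (Hgraph n k m) v : ℝ) := Nat.cast_nonneg _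
  have hnR : (0:ℝ) < n := by exact_mod_cast hn
  have hEub : (2 * edgeCount (Hgraph n k m) : ℝ) ≤ (n : ℝ) * k := by
    have h2 := (edge_ub n k m).trans (Nat.mul_le_mul_right k hmk)
    exact_mod_cast h2
  have ha1 : 0 ≤ avgDeg (Hgraph n k m) := by
    rw [avgDeg]
    positivity
  have ha2 : avgDeg (Hgraph n k m) ≤ k := by
    rw [avgDeg, div_le_iff₀ hnR]
    push_cast at hEub ⊢
    linarith
  rw [abs_le]
  constructor <;> linarith

lemma nodedist (n k m : ℕ) (hm : m ≤ n) : NodeDistLE (Hgraph n k 0) (Hgraph n k m) m := by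
  refine ⟨fun j => Hgraph n k (min j m), by simp, by simp, ?_⟩
  intro j hj
  refine ⟨⟨j, lt_of_lt_of_le hj hm⟩, ?_⟩
  intro u v h
  by_contra hc
  push_neg at hc
  obtain ⟨hu, hv⟩ := hc
  have hu' : (u:ℕ) ≠ j := fun hh => hu (Fin.ext hh)
  have hv' : (v:ℕ) ≠ j := fun hh => hv (Fin.ext hh)
  apply h
  dsimp only
  have e1 : min j m = j := min_eq_left hj.le
  have e2 : min (j+1) m = j+1 := min_eq_left hj
  rw [e1, e2, Hgraph_adj, Hgraph_adj]
  constructor <;> rintro ⟨a, b, c⟩ <;> exact ⟨a, b, by omega⟩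

/-- lower-bound construction for large `k`: two graphs in `𝒢_{n,k}`
at node distance at most `⌈1/ε⌉` whose edge densities differ by `Ω(k/(ε n²))`. -/
theorem lower_bound_large_k :
    ∃ (c₀ : ℝ) (N₀ : ℕ), 0 < c₀ ∧
      ∀ n : ℕ, N₀ ≤ n → ∀ k : ℕ, 1 ≤ k → (k : ℝ) ≤ (n : ℝ) / 2 →
        ∀ ε : ℝ, 2 / (n : ℝ) ≤ ε → ε ≤ 1 / 4 →
          ∃ G₀ G₁ : SimpleGraph (Fin n),
            Concentrated G₀ (k : ℝ) ∧ Concentrated G₁ (k : ℝ) ∧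
            NodeDistLE G₀ G₁ ⌈1 / ε⌉₊ ∧
            c₀ * (k : ℝ) / (ε * (n : ℝ) ^ 2) ≤ |edgeDensity G₀ - edgeDensity G₁| := by
  classical
  refine ⟨1, 8, one_pos, ?_⟩
  intro n hn k hk1 hk2 ε hε1 hε2
  set m : ℕ := ⌈1 / ε⌉₊ with hmdef
  have hn0 : (0:ℝ) < n := by positivity
  have hε0 : (0:ℝ) < ε := lt_of_lt_of_le (by positivity) hε1
  have hm1 : (1:ℝ)/ε ≤ m := Nat.le_ceil _
  have hm2 : (m:ℝ) < 1/ε + 1 := Nat.ceil_lt_add_one (by positivity)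
  have hεn : (1:ℝ)/ε ≤ (n:ℝ)/2 := by
    rw [div_le_div_iff₀ hε0 two_pos]
    rw [div_le_iff₀ hn0] at hε1
    linarith
  have h2m : 2 * m ≤ n + 1 := by
    have h0 : (m:ℝ) < (n:ℝ)/2 + 1 := lt_of_lt_of_le hm2 (by linarith)
    have h' : ((2 * m : ℕ):ℝ) < ((n + 2 : ℕ):ℝ) := by push_cast; linarith
    have h'' : 2 * m < n + 2 := by exact_mod_cast h'
    omega
  have h2k : 2 * k ≤ n := by
    have : (2 * k : ℝ) ≤ (n:ℝ) := by linarith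
    exact_mod_cast this
  have hmk : m + k ≤ n := by omega
  have hnn : 0 < n := by omega
  refine ⟨Hgraph n k 0, Hgraph n k m, conc_H0 n k k (by positivity),
    conc_H n k m hnn hmk, nodedist n k m (by omega), ?_⟩
  have hd0 : edgeDensity (Hgraph n k 0) = 0 := by
    rw [edgeDensity, edgeCount_H0]
    simp
  have hCpos : (0:ℝ) < (n.choose 2 : ℝ) := by
    have : 0 < n.choose 2 := Nat.choose_pos (by omega)
    exact_mod_cast this
  have hd1 : 0 ≤ edgeDensity (Hgraph n k m) := by
    rw [edgeDensity]
    positivity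
  rw [hd0, zero_sub, abs_neg, abs_of_nonneg hd1, edgeDensity]
  have hεn2 : (0:ℝ) < ε * (n:ℝ)^2 := by positivity
  rw [div_le_div_iff₀ hεn2 hCpos]
  have hE : (m:ℝ) * k ≤ 2 * (edgeCount (Hgraph n k m) : ℝ) := by
    exact_mod_cast edge_lb n k m hnn hmk
  have hC : (n.choose 2 : ℝ) ≤ (n:ℝ)^2 / 2 := by
    rw [Nat.cast_choose_two]
    have : (0:ℝ) ≤ (n:ℝ) := le_of_lt hn0
    nlinarith
  have h1ε : 1 ≤ ε * m := by
    rw [div_le_iff₀ hε0] at hm1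
    linarith
  have hk0 : (0:ℝ) ≤ k := Nat.cast_nonneg _
  have c1 : (1:ℝ) * k * (n.choose 2 : ℝ) ≤ (k:ℝ) * ((n:ℝ)^2/2) := by
    rw [one_mul]
    exact mul_le_mul_of_nonneg_left hC hk0
  have c2 : (k:ℝ) * ((n:ℝ)^2/2) ≤ (ε * m) * ((k:ℝ) * ((n:ℝ)^2/2)) :=
    le_mul_of_one_le_left (by positivity) h1ε
  have c3 : (ε * m) * ((k:ℝ) * ((n:ℝ)^2/2)) = ((m:ℝ) * k / 2) * (ε * (n:ℝ)^2) := by ring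
  have c4 : ((m:ℝ) * k / 2) * (ε * (n:ℝ)^2) ≤ (edgeCount (Hgraph n k m) : ℝ) * (ε * (n:ℝ)^2) :=
    mul_le_mul_of_nonneg_right (by linarith) (le_of_lt hεn2)
  linarith


end
end

section
/- Fix a parameter k* ≥ 0. For every pair of node-adjacent n-node graphs G and G', the quantities k_G and k_{G'} differ by at most 1, i.e. |k_G − k_{G'}| ≤ 1. -/
open MeasureTheory Finset
open scoped Classical

noncomputable section

lemma nodeAdjacent_symm' {n : ℕ} {G G' : SimpleGraph (Fin n)} (h : NodeAdjacent G G') :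
    NodeAdjacent G' G := by
  obtain ⟨i, hi⟩ := h
  exact ⟨i, fun u v huv => hi u v (fun hc => huv hc.symm)⟩

lemma deg_le_n {n : ℕ} (G : SimpleGraph (Fin n)) (v : Fin n) : deg G v ≤ n := by
  have := Set.ncard_le_ncard (Set.subset_univ (G.neighborSet v)) Set.finite_univ
  simpa [deg, Set.ncard_univ] using this

lemma deg_adj_le {n : ℕ} {G G' : SimpleGraph (Fin n)} {i : Fin n}
    (hi : ∀ u v : Fin n, ¬ (G.Adj u v ↔ G'.Adj u v) → u = i ∨ v = i)
    {v : Fin n} (hv : v ≠ i) : deg G' v ≤ deg G v + 1 := by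
  have hsub : G'.neighborSet v ⊆ insert i (G.neighborSet v) := by
    intro u hu
    by_cases hui : u = i
    · exact hui ▸ Set.mem_insert _ _
    · right
      have hiff : G.Adj v u ↔ G'.Adj v u := by
        by_contra hc
        rcases hi v u hc with h1 | h2
        · exact hv h1
        · exact hui h2
      exact hiff.mpr hu
  calc deg G' v ≤ (insert i (G.neighborSet v)).ncard :=
        Set.ncard_le_ncard hsub (Set.toFinite _)
    _ ≤ deg G v + 1 := Set.ncard_insert_le _ _

lemma deg_diff_le_one {n : ℕ} {G G' : SimpleGraph (Fin n)} {i : Fin n}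
    (hi : ∀ u v : Fin n, ¬ (G.Adj u v ↔ G'.Adj u v) → u = i ∨ v = i)
    {v : Fin n} (hv : v ≠ i) : |(deg G v : ℝ) - deg G' v| ≤ 1 := by
  have hi' : ∀ u v : Fin n, ¬ (G'.Adj u v ↔ G.Adj u v) → u = i ∨ v = i :=
    fun u v huv => hi u v fun hc => huv hc.symm
  have h1' : (deg G' v : ℝ) ≤ deg G v + 1 := by exact_mod_cast deg_adj_le hi hv
  have h2' : (deg G v : ℝ) ≤ deg G' v + 1 := by exact_mod_cast deg_adj_le hi' hv
  rw [abs_sub_le_iff]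
  constructor <;> linarith

lemma sum_deg_eq {n : ℕ} (G : SimpleGraph (Fin n)) :
    ∑ v, (deg G v : ℝ) = 2 * (edgeCount G : ℝ) := by
  have h1 : ∀ v, deg G v = G.degree v := by
    intro v
    simp [deg, SimpleGraph.degree, SimpleGraph.neighborFinset, Set.ncard_eq_toFinset_card']
  have h3 : edgeCount G = G.edgeFinset.card := by
    simp [edgeCount, SimpleGraph.edgeFinset, Set.ncard_eq_toFinset_card']
  have h2 := SimpleGraph.sum_degrees_eq_twice_card_edges G
  have : ∑ v, (deg G v : ℝ) = ((∑ v, G.degree v : ℕ) : ℝ) := by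
    push_cast
    exact Finset.sum_congr rfl fun v _ => by rw [h1]
  rw [this, h2, h3]
  push_cast
  ring

lemma avgDeg_eq_sum {n : ℕ} (G : SimpleGraph (Fin n)) :
    avgDeg G = (∑ v, (deg G v : ℝ)) / n := by
  rw [avgDeg, sum_deg_eq]

lemma avg_diff {n : ℕ} {G G' : SimpleGraph (Fin n)} (i : Fin n)
    (hi : ∀ u v : Fin n, ¬ (G.Adj u v ↔ G'.Adj u v) → u = i ∨ v = i) :
    |avgDeg G - avgDeg G'| ≤ 2 := by
  have hn : (0:ℝ) < n := by exact_mod_cast i.pos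
  rw [avgDeg_eq_sum, avgDeg_eq_sum, div_sub_div_same, ← Finset.sum_sub_distrib,
    abs_div, abs_of_pos hn, div_le_iff₀ hn]
  have hsum : |∑ v, ((deg G v:ℝ) - deg G' v)| ≤ ∑ v, |(deg G v:ℝ) - deg G' v| :=
    Finset.abs_sum_le_sum_abs _ _
  have hsplit : |(deg G i:ℝ) - deg G' i| + ∑ v ∈ Finset.univ.erase i, |(deg G v:ℝ) - deg G' v|
      = ∑ v, |(deg G v:ℝ) - deg G' v| :=
    Finset.add_sum_erase _ (fun v => |(deg G v:ℝ) - deg G' v|) (Finset.mem_univ i)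
  have hI : |(deg G i:ℝ) - deg G' i| ≤ n := by
    have a1 : (deg G i : ℝ) ≤ n := by exact_mod_cast deg_le_n G i
    have a2 : (deg G' i : ℝ) ≤ n := by exact_mod_cast deg_le_n G' i
    have b1 : (0:ℝ) ≤ (deg G i : ℝ) := by positivity
    have b2 : (0:ℝ) ≤ (deg G' i : ℝ) := by positivity
    rw [abs_sub_le_iff]
    constructor <;> linarith
  have hrest : ∑ v ∈ Finset.univ.erase i, |(deg G v:ℝ) - deg G' v| ≤ n := by
    calc ∑ v ∈ Finset.univ.erase i, |(deg G v:ℝ) - deg G' v|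
        ≤ ∑ _v ∈ Finset.univ.erase i, (1:ℝ) := by
          refine Finset.sum_le_sum fun v hv => ?_
          exact deg_diff_le_one hi (Finset.mem_erase.mp hv).1
      _ = ((Finset.univ.erase i).card : ℝ) := by simp
      _ ≤ n := by
          have : (Finset.univ.erase i).card ≤ n := by
            simpa using (Finset.card_erase_le).trans (by simp)
          exact_mod_cast this
  linarith

lemma farCount_le_n {n : ℕ} (H : SimpleGraph (Fin n)) (kstar : ℝ) (m : ℕ) :
    farCount H kstar m ≤ n := by
  have := Set.ncard_le_ncard
    (Set.subset_univ {v : Fin n | kstar + 3 * (m:ℝ) < |((deg H v : ℝ)) - avgDeg H|})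
    Set.finite_univ
  simpa [farCount, Set.ncard_univ] using this

lemma kOf_le_succ {n : ℕ} {kstar : ℝ}
    {G G' : SimpleGraph (Fin n)} (h : NodeAdjacent G G') :
    kOf G' kstar ≤ kOf G kstar + 1 := by
  obtain ⟨i, hi⟩ := h
  have hi' : ∀ u v : Fin n, ¬ (G'.Adj u v ↔ G.Adj u v) → u = i ∨ v = i :=
    fun u v huv => hi u v fun hc => huv hc.symm
  have hne : {m : ℕ | 0 < m ∧ farCount G kstar m ≤ m}.Nonempty :=
    ⟨n + 1, Nat.succ_pos n, (farCount_le_n G kstar (n+1)).trans (Nat.le_succ n)⟩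
  have hkfar : farCount G kstar (kOf G kstar) ≤ kOf G kstar := (Nat.sInf_mem hne).2
  set k := kOf G kstar with hkdef
  have havg := avg_diff i hi
  have hsub : {v : Fin n | kstar + 3 * (((k+1 : ℕ)):ℝ) < |((deg G' v:ℝ)) - avgDeg G'|} ⊆
      insert i {v : Fin n | kstar + 3 * ((k:ℕ):ℝ) < |((deg G v:ℝ)) - avgDeg G|} := by
    intro v hv
    by_cases hvi : v = i
    · exact hvi ▸ Set.mem_insert _ _
    · right
      simp only [Set.mem_setOf_eq] at hv ⊢
      have h4 : |(deg G' v:ℝ) - deg G v| ≤ 1 := by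
        rw [abs_sub_comm]; exact deg_diff_le_one hi hvi
      have habs : |(deg G' v:ℝ) - avgDeg G'| ≤ |(deg G v:ℝ) - avgDeg G| + 3 := by
        have h5 := abs_sub_abs_le_abs_sub ((deg G' v:ℝ) - avgDeg G') ((deg G v:ℝ) - avgDeg G)
        have heq : ((deg G' v:ℝ) - avgDeg G') - ((deg G v:ℝ) - avgDeg G)
            = ((deg G' v:ℝ) - deg G v) + (avgDeg G - avgDeg G') := by ring
        have h6 : |((deg G' v:ℝ) - avgDeg G') - ((deg G v:ℝ) - avgDeg G)| ≤ 3 := by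
          rw [heq]
          calc |((deg G' v:ℝ) - deg G v) + (avgDeg G - avgDeg G')|
              ≤ |(deg G' v:ℝ) - deg G v| + |avgDeg G - avgDeg G'| := abs_add_le _ _
            _ ≤ 1 + 2 := add_le_add h4 havg
            _ = 3 := by norm_num
        linarith
      push_cast at hv ⊢
      linarith
  have hcard : farCount G' kstar (k+1) ≤ k + 1 := by
    calc farCount G' kstar (k+1)
        ≤ (insert i {v : Fin n | kstar + 3 * ((k:ℕ):ℝ) < |((deg G v:ℝ)) - avgDeg G|}).ncard :=
          Set.ncard_le_ncard hsub (Set.toFinite _)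
      _ ≤ farCount G kstar k + 1 := Set.ncard_insert_le _ _
      _ ≤ k + 1 := by omega
  exact Nat.sInf_le ⟨Nat.succ_pos k, hcard⟩


/-- for node-adjacent graphs, `k_G` and `k_{G'}` differ by at most 1. -/
theorem kOf_adjacent {n : ℕ} (kstar : ℝ) (hkstar : 0 ≤ kstar)
    (G G' : SimpleGraph (Fin n)) (h : NodeAdjacent G G') :
    |(kOf G kstar : ℤ) - (kOf G' kstar : ℤ)| ≤ 1 := by
  have h1 := kOf_le_succ (kstar := kstar) h
  have h2 := kOf_le_succ (kstar := kstar) (nodeAdjacent_symm' h)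
  rw [abs_le]
  omega

end
end

section
/- Fix a parameter k* ≥ 0 and β > 0, and let G be an n-node graph. For every vertex u of G, the per-vertex sum f_u(G) = Σ_{v ≠ u} val_G({u,v}) satisfies | f_u(G) − d̄_G | ≤ k* + 5·k_G + 1/β. -/
open MeasureTheory Finset
open scoped Classical

noncomputable section

lemma wt_nonneg {n : ℕ} (G : SimpleGraph (Fin n)) (kstar β : ℝ) (v : Fin n) :
    0 ≤ wt G kstar β v := le_max_left _ _

lemma tDist_nonneg {n : ℕ} (G : SimpleGraph (Fin n)) (kstar : ℝ) (v : Fin n) :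
    0 ≤ tDist G kstar v := le_max_left _ _

lemma wt_le_one {n : ℕ} (G : SimpleGraph (Fin n)) (kstar β : ℝ) (hβ : 0 < β) (v : Fin n) :
    wt G kstar β v ≤ 1 := by
  have ht := tDist_nonneg G kstar v
  have h2 : 0 ≤ β * tDist G kstar v := mul_nonneg hβ.le ht
  rw [wt]; apply max_le <;> linarith

lemma wt_mul_tDist_le {n : ℕ} (G : SimpleGraph (Fin n)) (kstar β : ℝ) (hβ : 0 < β)
    (v : Fin n) : wt G kstar β v * tDist G kstar v ≤ 1 / β := by
  have ht := tDist_nonneg G kstar v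
  rw [wt]
  rcases le_or_gt (1 - β * tDist G kstar v) 0 with h | h
  · rw [max_eq_left h, zero_mul]; positivity
  · rw [max_eq_right h.le]
    have h1 : tDist G kstar v * β ≤ 1 := by nlinarith
    calc (1 - β * tDist G kstar v) * tDist G kstar v ≤ 1 * tDist G kstar v := by nlinarith [mul_nonneg (mul_nonneg hβ.le ht) ht]
      _ ≤ 1 / β := by rw [one_mul, le_div_iff₀ hβ]; exact h1

lemma abs_deg_le {n : ℕ} (G : SimpleGraph (Fin n)) (kstar : ℝ) (v : Fin n) :
    |(deg G v : ℝ) - avgDeg G| ≤ kstar + 3 * (kOf G kstar : ℝ) + tDist G kstar v := by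
  have h := le_max_right (0:ℝ)
    (|(deg G v : ℝ) - avgDeg G| - (kstar + 3 * (kOf G kstar : ℝ)))
  rw [tDist]; linarith

lemma wt_eq_one {n : ℕ} (G : SimpleGraph (Fin n)) (kstar β : ℝ) (v : Fin n)
    (h : |(deg G v : ℝ) - avgDeg G| ≤ kstar + 3 * (kOf G kstar : ℝ)) :
    wt G kstar β v = 1 := by
  have ht : tDist G kstar v = 0 := by rw [tDist, max_eq_left]; linarith
  rw [wt, ht, mul_zero, sub_zero, max_eq_right zero_le_one]

/-- the per-vertex sum satisfies `|f_u(G) - d̄_G| ≤ k* + 5 k_G + 1/β`. -/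
theorem fVert_close_to_avg {n : ℕ} (kstar β : ℝ) (hkstar : 0 ≤ kstar) (hβ : 0 < β)
    (G : SimpleGraph (Fin n)) (u : Fin n) :
    |fVert G kstar β u - avgDeg G| ≤ kstar + 5 * (kOf G kstar : ℝ) + 1 / β := by
  classical
  have hn : 0 < n := u.pos
  have hK0 : (0:ℝ) ≤ (kOf G kstar : ℝ) := Nat.cast_nonneg _
  -- k is in the defining set
  have hmem : kOf G kstar ∈ {m : ℕ | 0 < m ∧ farCount G kstar m ≤ m} := by
    rw [kOf]
    apply Nat.sInf_mem
    refine ⟨n + 1, Nat.succ_pos n, ?_⟩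
    calc farCount G kstar (n + 1)
        ≤ (Set.univ : Set (Fin n)).ncard :=
          Set.ncard_le_ncard (Set.subset_univ _) Set.finite_univ
      _ = n := by simp [Set.ncard_univ]
      _ ≤ n + 1 := Nat.le_succ n
  have hfar : farCount G kstar (kOf G kstar) ≤ kOf G kstar := hmem.2
  -- edge density facts
  have hE' : edgeCount G ≤ n.choose 2 := by
    have h := SimpleGraph.card_edgeFinset_le_card_choose_two (G := G)
    simpa [edgeCount, Set.ncard_eq_toFinset_card', SimpleGraph.edgeFinset] using h
  have hp0 : 0 ≤ edgeDensity G := div_nonneg (Nat.cast_nonneg _) (Nat.cast_nonneg _)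
  have hp1 : edgeDensity G ≤ 1 := by
    rcases Nat.eq_zero_or_pos (n.choose 2) with h0 | hpos
    · have hE0 : edgeCount G = 0 := by omega
      simp [edgeDensity, hE0]
    · rw [edgeDensity, div_le_one (by exact_mod_cast hpos)]
      exact_mod_cast hE'
  -- sum of p over erase u equals avgDeg
  have hcard : (Finset.univ.erase u).card = n - 1 := by
    simp [Finset.card_erase_of_mem]
  have hsum_p : ∑ _v ∈ Finset.univ.erase u, edgeDensity G = avgDeg G := by
    rw [Finset.sum_const, hcard, nsmul_eq_mul]
    by_cases hn2 : 2 ≤ n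
    · rw [edgeDensity, avgDeg, Nat.cast_choose_two,
        Nat.cast_sub (by omega : 1 ≤ n), Nat.cast_one]
      have hne : (n:ℝ) ≠ 0 := by positivity
      have hne1 : (n:ℝ) - 1 ≠ 0 := by
        have : (2:ℝ) ≤ (n:ℝ) := by exact_mod_cast hn2
        intro h; linarith
      field_simp
    · have hn1 : n = 1 := by omega
      subst hn1
      have hE0 : edgeCount G = 0 := by simpa using hE'
      simp [edgeDensity, avgDeg, hE0]
  -- sum of adjacency indicators equals degree
  have hdeg : ∑ v ∈ Finset.univ.erase u, (if G.Adj u v then (1:ℝ) else 0)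
      = (deg G u : ℝ) := by
    have hd : (deg G u : ℝ) = (G.degree u : ℝ) := by
      simp only [deg, Set.ncard_eq_toFinset_card']
      rfl
    rw [hd, Finset.sum_erase _ (by simp), Finset.sum_boole,
      ← SimpleGraph.neighborFinset_eq_filter]
    rfl
  -- the difference as a single sum
  have h1 : fVert G kstar β u - avgDeg G
      = ∑ v ∈ Finset.univ.erase u,
          min (wt G kstar β u) (wt G kstar β v)
            * ((if G.Adj u v then (1:ℝ) else 0) - edgeDensity G) := by
    rw [fVert, ← hsum_p, ← Finset.sum_sub_distrib]
    apply Finset.sum_congr rfl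
    intro v _
    rw [valPair]
    ring
  have h2 : ∑ v ∈ Finset.univ.erase u,
      ((if G.Adj u v then (1:ℝ) else 0) - edgeDensity G)
      = (deg G u : ℝ) - avgDeg G := by
    rw [Finset.sum_sub_distrib, hdeg, hsum_p]
  have hwu0 : 0 ≤ wt G kstar β u := wt_nonneg G kstar β u
  have hwu1 : wt G kstar β u ≤ 1 := wt_le_one G kstar β hβ u
  -- first part bound
  have hfirst : |∑ v ∈ Finset.univ.erase u,
      wt G kstar β u * ((if G.Adj u v then (1:ℝ) else 0) - edgeDensity G)|
      ≤ kstar + 3 * (kOf G kstar : ℝ) + 1 / β := by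
    rw [← Finset.mul_sum, h2, abs_mul, abs_of_nonneg hwu0]
    have habs := abs_deg_le G kstar u
    have hwt := wt_mul_tDist_le G kstar β hβ u
    have htu := tDist_nonneg G kstar u
    calc wt G kstar β u * |(deg G u : ℝ) - avgDeg G|
        ≤ wt G kstar β u * (kstar + 3 * (kOf G kstar : ℝ) + tDist G kstar u) :=
          mul_le_mul_of_nonneg_left habs hwu0
      _ = wt G kstar β u * (kstar + 3 * (kOf G kstar : ℝ))
            + wt G kstar β u * tDist G kstar u := by ring
      _ ≤ 1 * (kstar + 3 * (kOf G kstar : ℝ)) + 1 / β := by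
          refine add_le_add ?_ hwt
          exact mul_le_mul_of_nonneg_right hwu1 (by linarith)
      _ = kstar + 3 * (kOf G kstar : ℝ) + 1 / β := by ring
  -- second part bound
  have hfarcard :
      ((Finset.univ.filter (fun v : Fin n =>
        kstar + 3 * (kOf G kstar : ℝ) < |(deg G v : ℝ) - avgDeg G|)).card : ℝ)
      ≤ (kOf G kstar : ℝ) := by
    have heq : farCount G kstar (kOf G kstar)
        = (Finset.univ.filter (fun v : Fin n =>
            kstar + 3 * (kOf G kstar : ℝ) < |(deg G v : ℝ) - avgDeg G|)).card := by
      rw [farCount, Set.ncard_eq_toFinset_card', Set.toFinset_setOf]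
    rw [← heq]
    exact_mod_cast hfar
  have hsecond : ∑ v ∈ Finset.univ.erase u,
      |(min (wt G kstar β u) (wt G kstar β v) - wt G kstar β u)
        * ((if G.Adj u v then (1:ℝ) else 0) - edgeDensity G)|
      ≤ (kOf G kstar : ℝ) := by
    calc ∑ v ∈ Finset.univ.erase u,
        |(min (wt G kstar β u) (wt G kstar β v) - wt G kstar β u)
          * ((if G.Adj u v then (1:ℝ) else 0) - edgeDensity G)|
        ≤ ∑ v ∈ Finset.univ.erase u,
            (if kstar + 3 * (kOf G kstar : ℝ) < |(deg G v : ℝ) - avgDeg G|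
              then (1:ℝ) else 0) := by
          apply Finset.sum_le_sum
          intro v _
          by_cases hv : kstar + 3 * (kOf G kstar : ℝ) < |(deg G v : ℝ) - avgDeg G|
          · rw [if_pos hv, abs_mul]
            have hwv0 := wt_nonneg G kstar β v
            have hmin1 : min (wt G kstar β u) (wt G kstar β v) ≤ wt G kstar β u :=
              min_le_left _ _
            have hmin0 : 0 ≤ min (wt G kstar β u) (wt G kstar β v) :=
              le_min hwu0 hwv0
            have hb1 : |min (wt G kstar β u) (wt G kstar β v) - wt G kstar β u| ≤ 1 := by
              rw [abs_le]; constructor <;> linarith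
            have hb2 : |(if G.Adj u v then (1:ℝ) else 0) - edgeDensity G| ≤ 1 := by
              split <;> rw [abs_le] <;> constructor <;> linarith
            calc |min (wt G kstar β u) (wt G kstar β v) - wt G kstar β u|
                  * |(if G.Adj u v then (1:ℝ) else 0) - edgeDensity G|
                ≤ 1 * 1 := mul_le_mul hb1 hb2 (abs_nonneg _) zero_le_one
              _ = 1 := one_mul 1
          · rw [if_neg hv]
            have hwv1 : wt G kstar β v = 1 := wt_eq_one G kstar β v (le_of_not_gt hv)
            have : min (wt G kstar β u) (wt G kstar β v) = wt G kstar β u := by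
              rw [hwv1]; exact min_eq_left hwu1
            rw [this, sub_self, zero_mul, abs_zero]
      _ = ((Finset.univ.erase u).filter (fun v : Fin n =>
            kstar + 3 * (kOf G kstar : ℝ) < |(deg G v : ℝ) - avgDeg G|)).card := by
          rw [Finset.sum_boole]
      _ ≤ ((Finset.univ.filter (fun v : Fin n =>
            kstar + 3 * (kOf G kstar : ℝ) < |(deg G v : ℝ) - avgDeg G|)).card : ℝ) := by
          exact_mod_cast Finset.card_le_card
            (Finset.filter_subset_filter _ (Finset.erase_subset _ _))
      _ ≤ (kOf G kstar : ℝ) := hfarcard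
  -- combine
  have hsplit : fVert G kstar β u - avgDeg G
      = (∑ v ∈ Finset.univ.erase u,
            wt G kstar β u * ((if G.Adj u v then (1:ℝ) else 0) - edgeDensity G))
        + (∑ v ∈ Finset.univ.erase u,
            (min (wt G kstar β u) (wt G kstar β v) - wt G kstar β u)
              * ((if G.Adj u v then (1:ℝ) else 0) - edgeDensity G)) := by
    rw [h1, ← Finset.sum_add_distrib]
    apply Finset.sum_congr rfl
    intro v _
    ring
  calc |fVert G kstar β u - avgDeg G|
      ≤ |∑ v ∈ Finset.univ.erase u,
            wt G kstar β u * ((if G.Adj u v then (1:ℝ) else 0) - edgeDensity G)|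
        + |∑ v ∈ Finset.univ.erase u,
            (min (wt G kstar β u) (wt G kstar β v) - wt G kstar β u)
              * ((if G.Adj u v then (1:ℝ) else 0) - edgeDensity G)| := by
        rw [hsplit]; exact abs_add_le _ _
    _ ≤ (kstar + 3 * (kOf G kstar : ℝ) + 1 / β) + (kOf G kstar : ℝ) := by
        refine add_le_add hfirst ?_
        exact le_trans (Finset.abs_sum_le_sum_abs _ _) hsecond
    _ ≤ kstar + 5 * (kOf G kstar : ℝ) + 1 / β := by linarith


end
end
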